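/- Let K₀ < 0 and F₀ > 0. Suppose λ : [0,∞) → ℝ is differentiable, positive, satisfies λ(0) = 1 and λ'(t) = -(2/3)·K₀ + (2/3)·F₀·λ(t)⁻³ for all t ≥ 0. Then the scalar curvature R(t) := 2·K₀·λ(t)⁻¹ - (1/2)·F₀·λ(t)⁻⁴ converges to 0 as t → ∞. -/

import Mathlib

set_option maxHeartbeats 1000000

/-- For `K₀ < 0` and `F₀ > 0`, along any positive solution of the reduced
normalized ODE on `[0,∞)` with `λ(0) = 1`, the scalar curvature
`R(t) = 2K₀ λ(t)⁻¹ - (1/2)F₀ λ(t)⁻⁴` converges to `0` as `t → ∞`. -/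
theorem stmt_8 (K₀ F₀ : ℝ) (hK₀ : K₀ < 0) (hF₀ : 0 < F₀)
    (lam : ℝ → ℝ) (hpos : ∀ t ∈ Set.Ici (0:ℝ), 0 < lam t) (hl0 : lam 0 = 1)
    (hode : ∀ t ∈ Set.Ici (0:ℝ),
      HasDerivWithinAt lam (-(2/3) * K₀ + (2/3) * F₀ * ((lam t)^3)⁻¹) (Set.Ici 0) t) :
    Filter.Tendsto (fun t => 2 * K₀ * (lam t)⁻¹ - (1/2) * F₀ * ((lam t)^4)⁻¹)
      Filter.atTop (nhds 0) := by
  set c : ℝ := -(2/3) * K₀ with hc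
  have hcpos : 0 < c := by simp [hc]; nlinarith
  -- g t = lam t - c * t is monotone on Ici 0
  have hg : MonotoneOn (fun t => lam t - c * t) (Set.Ici (0:ℝ)) := by
    apply monotoneOn_of_hasDerivWithinAt_nonneg (convex_Ici 0)
      (f' := fun t => (2/3) * F₀ * ((lam t)^3)⁻¹)
    · exact fun t ht => ((hode t ht).continuousWithinAt.sub
        (continuousWithinAt_const.mul continuousWithinAt_id))
    · intro t ht
      rw [interior_Ici] at *
      have h := ((hode t (Set.mem_Ici.mpr (le_of_lt (Set.mem_Ioi.mp ht)))).sub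
        ((hasDerivWithinAt_id t (Set.Ici 0)).const_mul c)).mono Set.Ioi_subset_Ici_self
      have he : -(2/3) * K₀ + 2/3 * F₀ * (lam t ^ 3)⁻¹ - c * 1 = (2/3) * F₀ * ((lam t)^3)⁻¹ := by
        rw [hc]; ring
      rw [he] at h
      exact h
    · intro t ht
      rw [interior_Ici] at ht
      have := hpos t (Set.mem_Ici.mpr (le_of_lt (Set.mem_Ioi.mp ht)))
      positivity
  have hlow : ∀ t ≥ (0:ℝ), 1 + c * t ≤ lam t := by
    intro t ht
    have := hg (Set.mem_Ici.mpr le_rfl) ht ht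
    simp only [hl0, mul_zero, sub_zero] at this
    linarith
  have hlam : Filter.Tendsto lam Filter.atTop Filter.atTop := by
    apply Filter.tendsto_atTop_mono' _ _
      (Filter.tendsto_atTop_add_const_left _ 1 (Filter.Tendsto.const_mul_atTop hcpos Filter.tendsto_id))
    filter_upwards [Filter.eventually_ge_atTop (0:ℝ)] with t ht using hlow t ht
  have h1 : Filter.Tendsto (fun t => (lam t)⁻¹) Filter.atTop (nhds 0) :=
    hlam.inv_tendsto_atTop
  have h2 : Filter.Tendsto (fun t => ((lam t)^4)⁻¹) Filter.atTop (nhds 0) :=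
    by simpa [← inv_pow] using h1.pow 4
  have := ((tendsto_const_nhds (x := 2 * K₀)).mul h1).sub
    ((tendsto_const_nhds (x := (1:ℝ)/2 * F₀)).mul h2)
  simpa using this
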